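/- arXiv:1205.0101 — 3 statements merged into one kernel-verified Lean document; each statement's English description precedes it below -/
import Mathlib

section
/- Let (T, κ) be a monoidal monad on a monoidal category C such that C^T has tensors. Then for all T-algebras (A,a), (B,b), (C,c) there is a bijection between the set of bimorphisms A ⊗ B → C and the set of C^T-morphisms A ⊠ B → C, natural in each of the three variables. -/
open CategoryTheory Category MonoidalCategory Limits

universe v u

variable {C : Type u} [Category.{v} C] [MonoidalCategory C]

/-- A monoidal-monad structure on a monad `T`: a natural family
`κ X Y : T X ⊗ T Y ⟶ T (X ⊗ Y)` making `(T, η_E, κ)` a monoidal functor and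
compatible with the multiplication and unit of the monad. -/
structure MonoidalMonadStr (T : Monad C) where
  κ : ∀ X Y : C, T.obj X ⊗ T.obj Y ⟶ T.obj (X ⊗ Y)
  natural : ∀ {X Y X' Y' : C} (f : X ⟶ X') (g : Y ⟶ Y'),
      (T.map f ⊗ₘ T.map g) ≫ κ X' Y' = κ X Y ≫ T.map (f ⊗ₘ g)
  assoc : ∀ X Y Z : C,
      (α_ (T.obj X) (T.obj Y) (T.obj Z)).hom ≫ (𝟙 (T.obj X) ⊗ₘ κ Y Z) ≫ κ X (Y ⊗ Z)
        = (κ X Y ⊗ₘ 𝟙 (T.obj Z)) ≫ κ (X ⊗ Y) Z ≫ T.map (α_ X Y Z).hom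
  left_unit : ∀ X : C,
      (T.η.app (𝟙_ C) ⊗ₘ 𝟙 (T.obj X)) ≫ κ (𝟙_ C) X ≫ T.map (λ_ X).hom = (λ_ (T.obj X)).hom
  right_unit : ∀ X : C,
      (𝟙 (T.obj X) ⊗ₘ T.η.app (𝟙_ C)) ≫ κ X (𝟙_ C) ≫ T.map (ρ_ X).hom = (ρ_ (T.obj X)).hom
  mu : ∀ X Y : C,
      κ (T.obj X) (T.obj Y) ≫ T.map (κ X Y) ≫ T.μ.app (X ⊗ Y)
        = (T.μ.app X ⊗ₘ T.μ.app Y) ≫ κ X Y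
  unit : ∀ X Y : C, (T.η.app X ⊗ₘ T.η.app Y) ≫ κ X Y = T.η.app (X ⊗ Y)


/-- The Kleisli extension `μ · T g : T X ⟶ T Y` of `g : X ⟶ T Y`, as a morphism of
free `T`-algebras. -/
def freeHom (T : Monad C) {X Y : C} (g : X ⟶ T.obj Y) :
    (Monad.free T).obj X ⟶ (Monad.free T).obj Y where
  f := T.map g ≫ T.μ.app Y
  h := by
    show T.map (T.map g ≫ T.μ.app Y) ≫ T.μ.app Y = T.μ.app X ≫ T.map g ≫ T.μ.app Y
    rw [Functor.map_comp, Category.assoc, T.assoc Y, ← Category.assoc, ← Category.assoc]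
    congr 1
    exact T.μ.naturality g

/-- The transpose `c · T f : T X ⟶ C` of `f : X ⟶ C`, as a morphism from the free
`T`-algebra on `X` to the algebra `(C, c)`. -/
def transHom (T : Monad C) {X : C} {Cc : Monad.Algebra T} (f : X ⟶ Cc.A) :
    (Monad.free T).obj X ⟶ Cc where
  f := T.map f ≫ Cc.a
  h := by
    show T.map (T.map f ≫ Cc.a) ≫ Cc.a = T.μ.app X ≫ T.map f ≫ Cc.a
    rw [Functor.map_comp, Category.assoc, ← Cc.assoc, ← Category.assoc, ← Category.assoc]
    congr 1
    exact T.μ.naturality f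

/-- `f : A ⊗ B ⟶ C` is a bimorphism of `T`-algebras. -/
def IsBimorphism {T : Monad C} (κ : MonoidalMonadStr T) {A B Cc : Monad.Algebra T}
    (f : A.A ⊗ B.A ⟶ Cc.A) : Prop :=
  κ.κ A.A B.A ≫ T.map f ≫ Cc.a = (A.a ⊗ₘ B.a) ≫ f

lemma transHom_eta (T : Monad C) {X : C} {Cc : Monad.Algebra T}
    (p : (Monad.free T).obj X ⟶ Cc) :
    transHom T (T.η.app X ≫ p.f) = p := by
  ext
  dsimp [transHom]
  erw [Functor.map_comp, Category.assoc, p.h]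
  change T.map (T.η.app X) ≫ T.μ.app X ≫ p.f = p.f
  erw [← Category.assoc, T.right_unit]
  exact Category.id_comp _

lemma coeq_of_bimorphism (T : Monad C) (κ : MonoidalMonadStr T) {A B Cc : Monad.Algebra T}
    (f : A.A ⊗ B.A ⟶ Cc.A) (hf : IsBimorphism κ f) :
    freeHom T (κ.κ A.A B.A) ≫ transHom T f
      = (Monad.free T).map (A.a ⊗ₘ B.a) ≫ transHom T f := by
  ext
  dsimp [freeHom, transHom]
  have h1 : T.μ.app (A.A ⊗ B.A) ≫ T.map f = T.map (T.map f) ≫ T.μ.app Cc.A :=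
    (T.μ.naturality f).symm
  have h2 : T.μ.app Cc.A ≫ Cc.a = T.map Cc.a ≫ Cc.a := Cc.assoc
  change (T.map (κ.κ A.A B.A) ≫ T.μ.app (A.A ⊗ B.A)) ≫ T.map f ≫ Cc.a = T.map (A.a ⊗ₘ B.a) ≫ T.map f ≫ Cc.a
  simp only [Category.assoc]
  rw [reassoc_of% h1, h2, ← Functor.map_comp_assoc, ← Functor.map_comp_assoc]
  rw [show (κ.κ A.A B.A ≫ T.map f) ≫ Cc.a = (A.a ⊗ₘ B.a) ≫ f from by
    rw [Category.assoc]; exact hf]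
  rw [Functor.map_comp_assoc]

lemma bimorphism_of_coeq (T : Monad C) (κ : MonoidalMonadStr T) {A B Cc : Monad.Algebra T}
    (g : A.A ⊗ B.A ⟶ Cc.A)
    (h : freeHom T (κ.κ A.A B.A) ≫ transHom T g
        = (Monad.free T).map (A.a ⊗ₘ B.a) ≫ transHom T g) :
    IsBimorphism κ g := by
  have h' := congrArg Monad.Algebra.Hom.f h
  dsimp [freeHom, transHom] at h'
  have h'' := congrArg (fun t => T.η.app (T.obj A.A ⊗ T.obj B.A) ≫ t) h'
  change T.η.app _ ≫ (T.map (κ.κ A.A B.A) ≫ T.μ.app (A.A ⊗ B.A)) ≫ T.map g ≫ Cc.a = T.η.app _ ≫ T.map (A.a ⊗ₘ B.a) ≫ T.map g ≫ Cc.a at h''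
  simp only [Category.assoc] at h''
  rw [← T.η.naturality_assoc (κ.κ A.A B.A)] at h''
  rw [← T.η.naturality_assoc (A.a ⊗ₘ B.a)] at h''
  rw [← T.η.naturality_assoc g] at h''
  dsimp at h''
  rw [T.left_unit_assoc, Cc.unit, Category.comp_id] at h''
  exact h''


/-- when `C^T` has tensors, there is a bijection
`C^T(A,B;C) ≅ C^T(A ⊠ B, C)` between bimorphisms and morphisms out of the tensor
product, natural in all three variables. -/
theorem bimorphism_equiv_hom_from_tensor
    (T : Monad C) (κ : MonoidalMonadStr T)
    -- `C^T` has tensors: a choice of coequalizers `q_{A,B} : T(A⊗B) ⟶ A ⊠ B`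
    (tens : Monad.Algebra T → Monad.Algebra T → Monad.Algebra T)
    (q : ∀ A B : Monad.Algebra T, (Monad.free T).obj (A.A ⊗ B.A) ⟶ tens A B)
    (w : ∀ A B : Monad.Algebra T,
        freeHom T (κ.κ A.A B.A) ≫ q A B = (Monad.free T).map (A.a ⊗ₘ B.a) ≫ q A B)
    (hq : ∀ A B : Monad.Algebra T, Nonempty (IsColimit (Cofork.ofπ (q A B) (w A B))))
    -- the functorial action of the tensor, induced by the universal property
    (tmap : ∀ {A A' B B' : Monad.Algebra T},
        (A ⟶ A') → (B ⟶ B') → (tens A B ⟶ tens A' B'))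
    (htmap : ∀ {A A' B B' : Monad.Algebra T} (g : A ⟶ A') (h : B ⟶ B'),
        q A B ≫ tmap g h = (Monad.free T).map (g.f ⊗ₘ h.f) ≫ q A' B') :
    ∃ e : ∀ A B Cc : Monad.Algebra T,
        {f : A.A ⊗ B.A ⟶ Cc.A // IsBimorphism κ f} ≃ (tens A B ⟶ Cc),
      -- the bijection is implemented by the coequalizer
      (∀ (A B Cc : Monad.Algebra T) (f : {f : A.A ⊗ B.A ⟶ Cc.A // IsBimorphism κ f}),
          q A B ≫ e A B Cc f = transHom T f.1) ∧
      -- naturality in each of the three variables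
      (∀ (A A' B B' Cc Cc' : Monad.Algebra T) (g : A ⟶ A') (h : B ⟶ B')
          (k : Cc ⟶ Cc') (m : tens A' B' ⟶ Cc),
          ((e A B Cc').symm (tmap g h ≫ m ≫ k)).1
            = (g.f ⊗ₘ h.f) ≫ ((e A' B' Cc).symm m).1 ≫ k.f) := by
  classical
  have colim := fun A B => (hq A B).some
  -- the inverse map
  let ψ : ∀ {A B Cc : Monad.Algebra T}, (tens A B ⟶ Cc) → (A.A ⊗ B.A ⟶ Cc.A) :=
    fun {A B Cc} m => T.η.app (A.A ⊗ B.A) ≫ (q A B).f ≫ m.f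
  have hψtrans : ∀ {A B Cc : Monad.Algebra T} (m : tens A B ⟶ Cc),
      transHom T (ψ m) = q A B ≫ m := by
    intro A B Cc m
    have := transHom_eta T (q A B ≫ m)
    exact this
  have hψbim : ∀ {A B Cc : Monad.Algebra T} (m : tens A B ⟶ Cc),
      IsBimorphism κ (ψ m) := by
    intro A B Cc m
    apply bimorphism_of_coeq T κ
    rw [hψtrans m, ← Category.assoc, ← Category.assoc, w A B]
  -- the forward map via the coequalizer
  let φ : ∀ {A B Cc : Monad.Algebra T},
      {f : A.A ⊗ B.A ⟶ Cc.A // IsBimorphism κ f} → (tens A B ⟶ Cc) :=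
    fun {A B Cc} f =>
      Cofork.IsColimit.desc (colim A B) (transHom T f.1) (coeq_of_bimorphism T κ f.1 f.2)
  have hφπ : ∀ {A B Cc : Monad.Algebra T} (f : {f : A.A ⊗ B.A ⟶ Cc.A // IsBimorphism κ f}),
      q A B ≫ φ f = transHom T f.1 := by
    intro A B Cc f
    exact Cofork.IsColimit.π_desc (colim A B)
  have hψφ : ∀ {A B Cc : Monad.Algebra T} (f : {f : A.A ⊗ B.A ⟶ Cc.A // IsBimorphism κ f}),
      ψ (φ f) = f.1 := by
    intro A B Cc f
    have h1 : (q A B ≫ φ f).f = (transHom T f.1).f := by rw [hφπ f]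
    simp only [Monad.Algebra.comp_f] at h1
    show T.η.app (A.A ⊗ B.A) ≫ (q A B).f ≫ (φ f).f = f.1
    erw [h1]
    dsimp [transHom]
    change T.η.app (A.A ⊗ B.A) ≫ T.map f.1 ≫ Cc.a = f.1
    rw [← T.η.naturality_assoc f.1]
    dsimp
    rw [Cc.unit, Category.comp_id]
  refine ⟨fun A B Cc =>
    { toFun := φ
      invFun := fun m => ⟨ψ m, hψbim m⟩
      left_inv := fun f => Subtype.ext (hψφ f)
      right_inv := fun m => by
        apply Cofork.IsColimit.hom_ext (colim A B)
        simp only [Cofork.π_ofπ]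
        rw [hφπ, hψtrans] }, fun A B Cc f => hφπ f, ?_⟩
  intro A A' B B' Cc Cc' g h k m
  show ψ (tmap g h ≫ m ≫ k) = (g.f ⊗ₘ h.f) ≫ ψ m ≫ k.f
  have h1 : (q A B ≫ tmap g h).f = ((Monad.free T).map (g.f ⊗ₘ h.f) ≫ q A' B').f := by
    rw [htmap g h]
  simp only [Monad.Algebra.comp_f] at h1
  show T.η.app (A.A ⊗ B.A) ≫ (q A B).f ≫ (tmap g h ≫ m ≫ k).f
      = (g.f ⊗ₘ h.f) ≫ (T.η.app (A'.A ⊗ B'.A) ≫ (q A' B').f ≫ m.f) ≫ k.f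
  simp only [Monad.Algebra.comp_f]
  erw [← Category.assoc ((q A B).f), h1]
  dsimp [Monad.free] at h1 ⊢
  simp only [Category.assoc]
  rw [← T.η.naturality_assoc (g.f ⊗ₘ h.f)]
  dsimp
end

section
/- Let (T, κ) be a monoidal monad on a monoidal category C. For all objects A, B of C: (1) the pair (μ_{A⊗B}·Tκ_{A,B}, T(μ_A⊗μ_B)) : T(TTA⊗TTB) ⇉ T(TA⊗TB) has coequalizer μ_{A⊗B}·Tκ_{A,B} : T(TA⊗TB) → T(A⊗B) in C^T; (2) for C-morphisms f : A → A' and g : B → B', T(f⊗g) is the unique C^T-morphism satisfying T(f⊗g)·(μ·Tκ) = (μ·Tκ)·T(Tf⊗Tg). Consequently, the tensor of free T-algebras satisfies TA ⊠ TB ≅ T(A⊗B) with q_{TA,TB} = μ_{A⊗B}·Tκ_{A,B}. -/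
open CategoryTheory Category MonoidalCategory Limits

universe v u

variable {C : Type u} [Category.{v} C] [MonoidalCategory C]

section Aux

variable (T : Monad C) (κ : MonoidalMonadStr T)

lemma mu_nat {X Y : C} (f : X ⟶ Y) :
    T.μ.app X ≫ T.map f = T.map (T.map f) ≫ T.μ.app Y := (T.μ.naturality f).symm

/-- `(η ⊗ η) ≫ κ ≫ μ`-type computation: `s ≫ π = 𝟙` at the level of `C`. -/
lemma c_s_pi (A B : C) :
    T.map (T.η.app A ⊗ₘ T.η.app B) ≫ T.map (κ.κ A B) ≫ T.μ.app (A ⊗ B)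
      = 𝟙 (T.obj (A ⊗ B)) := by
  rw [← Category.assoc, ← T.map_comp, κ.unit]
  exact T.right_unit _

/-- `π ≫ s = t ≫ f` at the level of `C`. -/
lemma c_pi_s (A B : C) :
    (T.map (κ.κ A B) ≫ T.μ.app (A ⊗ B)) ≫ T.map (T.η.app A ⊗ₘ T.η.app B)
      = T.map (T.map (T.η.app A) ⊗ₘ T.map (T.η.app B))
          ≫ T.map (κ.κ (T.obj A) (T.obj B)) ≫ T.μ.app (T.obj A ⊗ T.obj B) := by
  rw [Category.assoc, mu_nat, ← Category.assoc, ← Category.assoc, ← T.map_comp,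
    ← T.map_comp, κ.natural]
  rfl

/-- `t ≫ g = 𝟙` at the level of `C`. -/
lemma c_t_g (A B : C) :
    (T.map (T.η.app A) ⊗ₘ T.map (T.η.app B)) ≫ (T.μ.app A ⊗ₘ T.μ.app B)
      = 𝟙 (T.obj A ⊗ T.obj B) := by
  rw [tensorHom_comp_tensorHom, T.right_unit, T.right_unit, id_tensorHom_id]
  rfl

/-- The fork condition `f ≫ π = g ≫ π` at the level of `C`. -/
lemma c_fork (A B : C) :
    (T.map (κ.κ (T.obj A) (T.obj B)) ≫ T.μ.app (T.obj A ⊗ T.obj B))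
        ≫ T.map (κ.κ A B) ≫ T.μ.app (A ⊗ B)
      = T.map (T.μ.app A ⊗ₘ T.μ.app B) ≫ T.map (κ.κ A B) ≫ T.μ.app (A ⊗ B) :=
  calc (T.map (κ.κ (T.obj A) (T.obj B)) ≫ T.μ.app (T.obj A ⊗ T.obj B))
        ≫ T.map (κ.κ A B) ≫ T.μ.app (A ⊗ B)
      = T.map (κ.κ (T.obj A) (T.obj B))
          ≫ (T.μ.app (T.obj A ⊗ T.obj B) ≫ T.map (κ.κ A B)) ≫ T.μ.app (A ⊗ B) := by
        simp only [Category.assoc]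
    _ = T.map (κ.κ (T.obj A) (T.obj B))
          ≫ (T.map (T.map (κ.κ A B)) ≫ T.μ.app (T.obj (A ⊗ B))) ≫ T.μ.app (A ⊗ B) := by
        rw [mu_nat]
    _ = T.map (κ.κ (T.obj A) (T.obj B)) ≫ T.map (T.map (κ.κ A B))
          ≫ T.map (T.μ.app (A ⊗ B)) ≫ T.μ.app (A ⊗ B) := by
        rw [T.assoc (A ⊗ B)]; simp only [Category.assoc]
    _ = T.map (κ.κ (T.obj A) (T.obj B) ≫ T.map (κ.κ A B) ≫ T.μ.app (A ⊗ B))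
          ≫ T.μ.app (A ⊗ B) := by
        simp only [T.map_comp, Category.assoc]
    _ = T.map ((T.μ.app A ⊗ₘ T.μ.app B) ≫ κ.κ A B) ≫ T.μ.app (A ⊗ B) := by
        rw [κ.mu]
    _ = T.map (T.μ.app A ⊗ₘ T.μ.app B) ≫ T.map (κ.κ A B) ≫ T.μ.app (A ⊗ B) := by
        simp only [T.map_comp, Category.assoc]

/-- `s ≫ π = 𝟙` : the splitting of the coequalizer, in `C^T`. -/
lemma s_pi (A B : C) :
    (Monad.free T).map (T.η.app A ⊗ₘ T.η.app B) ≫ freeHom T (κ.κ A B)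
      = 𝟙 ((Monad.free T).obj (A ⊗ B)) := by
  ext
  exact c_s_pi T κ A B

/-- `π ≫ s = t ≫ f`, in `C^T`. -/
lemma pi_s (A B : C) :
    freeHom T (κ.κ A B) ≫ (Monad.free T).map (T.η.app A ⊗ₘ T.η.app B)
      = (Monad.free T).map (T.map (T.η.app A) ⊗ₘ T.map (T.η.app B))
          ≫ freeHom T (κ.κ (T.obj A) (T.obj B)) := by
  ext
  exact c_pi_s T κ A B

/-- The fork condition `f ≫ π = g ≫ π` in `C^T`. -/
lemma fork_w (A B : C) :
    freeHom T (κ.κ (T.obj A) (T.obj B)) ≫ freeHom T (κ.κ A B)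
      = (Monad.free T).map (T.μ.app A ⊗ₘ T.μ.app B) ≫ freeHom T (κ.κ A B) := by
  ext
  exact c_fork T κ A B

/-- The coequalizer in `C^T`. -/
noncomputable def coeqIsColimit (A B : C)
    (w : freeHom T (κ.κ (T.obj A) (T.obj B)) ≫ freeHom T (κ.κ A B)
        = (Monad.free T).map (T.μ.app A ⊗ₘ T.μ.app B) ≫ freeHom T (κ.κ A B)) :
    IsColimit (Cofork.ofπ (freeHom T (κ.κ A B)) w) :=
  Cofork.IsColimit.mk _
    (fun s => (Monad.free T).map (T.η.app A ⊗ₘ T.η.app B) ≫ s.π)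
    (fun s => by
      rw [Cofork.π_ofπ]
      calc freeHom T (κ.κ A B) ≫ (Monad.free T).map (T.η.app A ⊗ₘ T.η.app B) ≫ s.π
          = (freeHom T (κ.κ A B) ≫ (Monad.free T).map (T.η.app A ⊗ₘ T.η.app B)) ≫ s.π := by
            rw [Category.assoc]
        _ = ((Monad.free T).map (T.map (T.η.app A) ⊗ₘ T.map (T.η.app B))
              ≫ freeHom T (κ.κ (T.obj A) (T.obj B))) ≫ s.π := by rw [pi_s]
        _ = (Monad.free T).map (T.map (T.η.app A) ⊗ₘ T.map (T.η.app B))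
              ≫ freeHom T (κ.κ (T.obj A) (T.obj B)) ≫ s.π := by rw [Category.assoc]
        _ = (Monad.free T).map (T.map (T.η.app A) ⊗ₘ T.map (T.η.app B))
              ≫ (Monad.free T).map (T.μ.app A ⊗ₘ T.μ.app B) ≫ s.π := by rw [s.condition]
        _ = (Monad.free T).map
              ((T.map (T.η.app A) ⊗ₘ T.map (T.η.app B)) ≫ (T.μ.app A ⊗ₘ T.μ.app B)) ≫ s.π := by
            rw [Functor.map_comp, Category.assoc]
        _ = (Monad.free T).map (𝟙 (T.obj A ⊗ T.obj B)) ≫ s.π := by rw [c_t_g]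
        _ = s.π := by rw [CategoryTheory.Functor.map_id, Category.id_comp])
    (fun s m hm => by
      rw [Cofork.π_ofπ] at hm
      calc m = 𝟙 ((Monad.free T).obj (A ⊗ B)) ≫ m := by rw [Category.id_comp]
        _ = ((Monad.free T).map (T.η.app A ⊗ₘ T.η.app B) ≫ freeHom T (κ.κ A B)) ≫ m := by
            rw [s_pi]
        _ = (Monad.free T).map (T.η.app A ⊗ₘ T.η.app B) ≫ freeHom T (κ.κ A B) ≫ m := by
            rw [Category.assoc]
        _ = (Monad.free T).map (T.η.app A ⊗ₘ T.η.app B) ≫ s.π := by rw [hm])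

end Aux

/-- the morphism `μ·Tκ : T(TA⊗TB) ⟶ T(A⊗B)` coequalizes (in `C^T`)
the pair `(μ·Tκ, T(μ⊗μ))`, `T(f⊗g)` is the unique morphism compatible with these
coequalizers, and consequently `TA ⊠ TB ≅ T(A⊗B)` with `q_{TA,TB} = μ·Tκ`. -/
theorem tensor_of_free_algebras (T : Monad C) (κ : MonoidalMonadStr T) (A B : C) :
    -- (1) the coequalizer diagram
    (∃ w : freeHom T (κ.κ (T.obj A) (T.obj B)) ≫ freeHom T (κ.κ A B)
         = (Monad.free T).map (T.μ.app A ⊗ₘ T.μ.app B) ≫ freeHom T (κ.κ A B),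
      Nonempty (IsColimit (Cofork.ofπ (freeHom T (κ.κ A B)) w))) ∧
    -- (2) uniqueness of the induced morphism `T(f ⊗ₘ g)`
    (∀ {A' B' : C} (f : A ⟶ A') (g : B ⟶ B'),
      (freeHom T (κ.κ A B) ≫ (Monad.free T).map (f ⊗ₘ g)
          = (Monad.free T).map (T.map f ⊗ₘ T.map g) ≫ freeHom T (κ.κ A' B')) ∧
      (∀ h : (Monad.free T).obj (A ⊗ B) ⟶ (Monad.free T).obj (A' ⊗ B'),
        freeHom T (κ.κ A B) ≫ h
            = (Monad.free T).map (T.map f ⊗ₘ T.map g) ≫ freeHom T (κ.κ A' B') →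
        h = (Monad.free T).map (f ⊗ₘ g))) ∧
    -- (3) consequently, any tensor product of the free algebras on `A` and `B`
    -- is isomorphic to the free algebra on `A ⊗ B`, identifying `q_{TA,TB}` with `μ·Tκ`
    (∀ {Q : Monad.Algebra T}
      (q : (Monad.free T).obj (T.obj A ⊗ T.obj B) ⟶ Q)
      (w : freeHom T (κ.κ (T.obj A) (T.obj B)) ≫ q
          = (Monad.free T).map (T.μ.app A ⊗ₘ T.μ.app B) ≫ q),
      Nonempty (IsColimit (Cofork.ofπ q w)) →
      ∃ e : Q ≅ (Monad.free T).obj (A ⊗ B), q ≫ e.hom = freeHom T (κ.κ A B)) := by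
  refine ⟨⟨fork_w T κ A B, ⟨coeqIsColimit T κ A B _⟩⟩, ?_, ?_⟩
  · intro A' B' f g
    have c_key : (T.map (κ.κ A B) ≫ T.μ.app (A ⊗ B)) ≫ T.map (f ⊗ₘ g)
        = T.map (T.map f ⊗ₘ T.map g) ≫ T.map (κ.κ A' B') ≫ T.μ.app (A' ⊗ B') := by
      rw [Category.assoc, mu_nat]
      simp only [← Category.assoc]
      rw [← T.map_comp, ← T.map_comp, κ.natural]
    have key : freeHom T (κ.κ A B) ≫ (Monad.free T).map (f ⊗ₘ g)
        = (Monad.free T).map (T.map f ⊗ₘ T.map g) ≫ freeHom T (κ.κ A' B') := by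
      ext
      exact c_key
    refine ⟨key, fun h hh => ?_⟩
    have hnat : (T.η.app A ⊗ₘ T.η.app B) ≫ (T.map f ⊗ₘ T.map g)
        = (f ⊗ₘ g) ≫ (T.η.app A' ⊗ₘ T.η.app B') := by
      have h1 : T.η.app A ≫ T.map f = f ≫ T.η.app A' := by exact (T.η.naturality f).symm
      have h2 : T.η.app B ≫ T.map g = g ≫ T.η.app B' := by exact (T.η.naturality g).symm
      rw [tensorHom_comp_tensorHom, h1, h2, ← tensorHom_comp_tensorHom]
    calc h = 𝟙 ((Monad.free T).obj (A ⊗ B)) ≫ h := by rw [Category.id_comp]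
      _ = ((Monad.free T).map (T.η.app A ⊗ₘ T.η.app B) ≫ freeHom T (κ.κ A B)) ≫ h := by
          rw [s_pi]
      _ = (Monad.free T).map (T.η.app A ⊗ₘ T.η.app B) ≫ freeHom T (κ.κ A B) ≫ h := by
          rw [Category.assoc]
      _ = (Monad.free T).map (T.η.app A ⊗ₘ T.η.app B)
            ≫ (Monad.free T).map (T.map f ⊗ₘ T.map g) ≫ freeHom T (κ.κ A' B') := by
          rw [hh]
      _ = (Monad.free T).map ((T.η.app A ⊗ₘ T.η.app B) ≫ (T.map f ⊗ₘ T.map g))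
            ≫ freeHom T (κ.κ A' B') := by rw [Functor.map_comp, Category.assoc]
      _ = (Monad.free T).map ((f ⊗ₘ g) ≫ (T.η.app A' ⊗ₘ T.η.app B'))
            ≫ freeHom T (κ.κ A' B') := by rw [hnat]
      _ = (Monad.free T).map (f ⊗ₘ g)
            ≫ (Monad.free T).map (T.η.app A' ⊗ₘ T.η.app B') ≫ freeHom T (κ.κ A' B') := by
          rw [Functor.map_comp, Category.assoc]
      _ = (Monad.free T).map (f ⊗ₘ g) ≫ 𝟙 ((Monad.free T).obj (A' ⊗ B')) := by rw [s_pi]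
      _ = (Monad.free T).map (f ⊗ₘ g) := by rw [Category.comp_id]
  · intro Q q w ⟨hq⟩
    refine ⟨hq.coconePointUniqueUpToIso (coeqIsColimit T κ A B (fork_w T κ A B)), ?_⟩
    simpa using hq.comp_coconePointUniqueUpToIso_hom
      (coeqIsColimit T κ A B (fork_w T κ A B)) WalkingParallelPair.one
end

section
/- Let (T, κ) be a monoidal monad on a monoidal category C such that C^T has tensors and (C^T, ⊠, TE) is monoidal with induced structure. For a monoid M in (C^T, ⊠, TE), the morphisms τ_X = (e ⊠ 1_{TX}) · λ̄⁻¹_{TX} : TX → M ⊠ TX are the components of a monad morphism τ : T → M ⊠ T, where M ⊠ T is the monad on C with functor M ⊠ T(−), multiplication (m ⊠ 1)·ᾱ⁻¹·(1 ⊠ (ξ ⋈ μ)) and unit (e ⊠ 1)·λ̄⁻¹·η. -/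
open CategoryTheory Category MonoidalCategory Limits

universe v u

variable {C : Type u} [Category.{v} C] [MonoidalCategory C]

/-- A monoidal monad is symmetric (with respect to a braiding `bc` on `C`). -/
def MonoidalMonadStr.IsSymmetricWrt {T : Monad C} (κ : MonoidalMonadStr T)
    (bc : BraidedCategory C) : Prop :=
  ∀ X Y : C,
    (bc.braiding (T.obj X) (T.obj Y)).hom ≫ κ.κ Y X
      = κ.κ X Y ≫ T.map (bc.braiding X Y).hom

/-- A monoidal structure on `C^T` with tensor given by the coequalizers
`q_{A,B} : T(A⊗B) ⟶ A ⊠ B` and all structure morphisms *induced* by those of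
`(C, ⊗, E)`; the unit is the free algebra `TE`. -/
structure InducedMonoidal (T : Monad C) (κ : MonoidalMonadStr T)
    (tens : Monad.Algebra T → Monad.Algebra T → Monad.Algebra T)
    (q : ∀ A B : Monad.Algebra T, (Monad.free T).obj (A.A ⊗ B.A) ⟶ tens A B) :
    Type (max u v) where
  /-- functoriality of the tensor, induced by the universal property of `q` -/
  tmap : ∀ {A A' B B' : Monad.Algebra T}, (A ⟶ A') → (B ⟶ B') → (tens A B ⟶ tens A' B')
  tmap_q : ∀ {A A' B B' : Monad.Algebra T} (f : A ⟶ A') (g : B ⟶ B'),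
      q A B ≫ tmap f g = (Monad.free T).map (f.f ⊗ₘ g.f) ≫ q A' B'
  tmap_id : ∀ A B : Monad.Algebra T, tmap (𝟙 A) (𝟙 B) = 𝟙 (tens A B)
  tmap_comp : ∀ {A A' A'' B B' B'' : Monad.Algebra T}
      (f : A ⟶ A') (f' : A' ⟶ A'') (g : B ⟶ B') (g' : B' ⟶ B''),
      tmap (f ≫ f') (g ≫ g') = tmap f g ≫ tmap f' g'
  /-- the associator, induced by the associator of `C` -/
  assoc : ∀ A B Cc : Monad.Algebra T, tens (tens A B) Cc ≅ tens A (tens B Cc)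
  assoc_induced : ∀ A B Cc : Monad.Algebra T,
      ((Monad.free T).map ((T.η.app (A.A ⊗ B.A) ≫ (q A B).f) ⊗ₘ 𝟙 Cc.A)
          ≫ q (tens A B) Cc) ≫ (assoc A B Cc).hom
        = (Monad.free T).map (α_ A.A B.A Cc.A).hom ≫
            (Monad.free T).map (𝟙 A.A ⊗ₘ (T.η.app (B.A ⊗ Cc.A) ≫ (q B Cc).f))
              ≫ q A (tens B Cc)
  assoc_natural : ∀ {A A' B B' Cc Cc' : Monad.Algebra T}
      (f : A ⟶ A') (g : B ⟶ B') (h : Cc ⟶ Cc'),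
      tmap (tmap f g) h ≫ (assoc A' B' Cc').hom = (assoc A B Cc).hom ≫ tmap f (tmap g h)
  pentagon : ∀ A B Cc D : Monad.Algebra T,
      tmap (assoc A B Cc).hom (𝟙 D) ≫ (assoc A (tens B Cc) D).hom
          ≫ tmap (𝟙 A) (assoc B Cc D).hom
        = (assoc (tens A B) Cc D).hom ≫ (assoc A B (tens Cc D)).hom
  /-- the left unitor, induced by the bimorphism `a · Tλ · κ · (1 ⊗ η)` -/
  lunit : ∀ A : Monad.Algebra T, tens ((Monad.free T).obj (𝟙_ C)) A ≅ A
  lunit_induced : ∀ A : Monad.Algebra T,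
      q ((Monad.free T).obj (𝟙_ C)) A ≫ (lunit A).hom
        = transHom T ((𝟙 (T.obj (𝟙_ C)) ⊗ₘ T.η.app A.A) ≫ κ.κ (𝟙_ C) A.A
            ≫ T.map (λ_ A.A).hom ≫ A.a)
  lunit_natural : ∀ {A B : Monad.Algebra T} (f : A ⟶ B),
      tmap (𝟙 ((Monad.free T).obj (𝟙_ C))) f ≫ (lunit B).hom = (lunit A).hom ≫ f
  /-- the right unitor, induced by the bimorphism `a · Tρ · κ · (η ⊗ 1)` -/
  runit : ∀ A : Monad.Algebra T, tens A ((Monad.free T).obj (𝟙_ C)) ≅ A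
  runit_induced : ∀ A : Monad.Algebra T,
      q A ((Monad.free T).obj (𝟙_ C)) ≫ (runit A).hom
        = transHom T ((T.η.app A.A ⊗ₘ 𝟙 (T.obj (𝟙_ C))) ≫ κ.κ A.A (𝟙_ C)
            ≫ T.map (ρ_ A.A).hom ≫ A.a)
  runit_natural : ∀ {A B : Monad.Algebra T} (f : A ⟶ B),
      tmap f (𝟙 ((Monad.free T).obj (𝟙_ C))) ≫ (runit B).hom = (runit A).hom ≫ f
  triangle : ∀ A B : Monad.Algebra T,
      (assoc A ((Monad.free T).obj (𝟙_ C)) B).hom ≫ tmap (𝟙 A) (lunit B).hom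
        = tmap (runit A).hom (𝟙 B)

/-- A symmetric extension of the induced monoidal structure on `C^T`, with
braiding induced by a braiding `bc` of `C`. -/
structure SymmetricInducedMonoidal (T : Monad C) (κ : MonoidalMonadStr T)
    (bc : BraidedCategory C)
    (tens : Monad.Algebra T → Monad.Algebra T → Monad.Algebra T)
    (q : ∀ A B : Monad.Algebra T, (Monad.free T).obj (A.A ⊗ B.A) ⟶ tens A B)
    extends InducedMonoidal T κ tens q where
  braid : ∀ A B : Monad.Algebra T, tens A B ≅ tens B A
  braid_induced : ∀ A B : Monad.Algebra T,
      q A B ≫ (braid A B).hom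
        = (Monad.free T).map (bc.braiding A.A B.A).hom ≫ q B A
  braid_natural : ∀ {A A' B B' : Monad.Algebra T} (f : A ⟶ A') (g : B ⟶ B'),
      tmap f g ≫ (braid A' B').hom = (braid A B).hom ≫ tmap g f
  symmetry : ∀ A B : Monad.Algebra T, (braid A B).hom ≫ (braid B A).hom = 𝟙 (tens A B)
  hexagon : ∀ A B Cc : Monad.Algebra T,
      (assoc A B Cc).hom ≫ (braid A (tens B Cc)).hom ≫ (assoc B Cc A).hom
        = tmap (braid A B).hom (𝟙 Cc) ≫ (assoc B A Cc).hom ≫ tmap (𝟙 B) (braid A Cc).hom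

/-- The structure map of an algebra, as a morphism of algebras from the free algebra
on its carrier. -/
def structHom (T : Monad C) (D : Monad.Algebra T) : (Monad.free T).obj D.A ⟶ D where
  f := D.a
  h := D.assoc.symm

/-- The component `τ_X = (e ⊠ 1_{TX}) · λ̄⁻¹ : TX ⟶ M ⊠ TX` (as a morphism of `C`). -/
def tauHom (T : Monad C) {κ : MonoidalMonadStr T}
    {tens : Monad.Algebra T → Monad.Algebra T → Monad.Algebra T}
    {q : ∀ A B : Monad.Algebra T, (Monad.free T).obj (A.A ⊗ B.A) ⟶ tens A B}
    (MT : InducedMonoidal T κ tens q) (M : Monad.Algebra T)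
    (ee : (Monad.free T).obj (𝟙_ C) ⟶ M) (X : C) :
    T.obj X ⟶ (tens M ((Monad.free T).obj X)).A :=
  ((MT.lunit ((Monad.free T).obj X)).inv
    ≫ MT.tmap ee (𝟙 ((Monad.free T).obj X))).f

/-- The multiplication `(m ⊠ 1)·ᾱ⁻¹·(1 ⊠ (ξ ⋈ μ))` of the monad `M ⊠ T`
(as a morphism of `C`). -/
def muTilde (T : Monad C) {κ : MonoidalMonadStr T}
    {tens : Monad.Algebra T → Monad.Algebra T → Monad.Algebra T}
    {q : ∀ A B : Monad.Algebra T, (Monad.free T).obj (A.A ⊗ B.A) ⟶ tens A B}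
    (MT : InducedMonoidal T κ tens q) (M : Monad.Algebra T)
    (mm : tens M M ⟶ M) (X : C) :
    (tens M ((Monad.free T).obj
        ((tens M ((Monad.free T).obj X)).A))).A ⟶ (tens M ((Monad.free T).obj X)).A :=
  (MT.tmap (𝟙 M) (structHom T (tens M ((Monad.free T).obj X)))
    ≫ (MT.assoc M M ((Monad.free T).obj X)).inv
    ≫ MT.tmap mm (𝟙 ((Monad.free T).obj X))).f

section AuxTau18

variable {T : Monad C} {κ : MonoidalMonadStr T}
  {tens : Monad.Algebra T → Monad.Algebra T → Monad.Algebra T}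
  {q : ∀ A B : Monad.Algebra T, (Monad.free T).obj (A.A ⊗ B.A) ⟶ tens A B}
  (MT : InducedMonoidal T κ tens q)

lemma aux_tmap_id_comp {A B B' B'' : Monad.Algebra T} (g : B ⟶ B') (g' : B' ⟶ B'') :
    MT.tmap (𝟙 A) (g ≫ g') = MT.tmap (𝟙 A) g ≫ MT.tmap (𝟙 A) g' := by
  rw [← MT.tmap_comp, comp_id]

lemma aux_tmap_comp_id {A A' A'' B : Monad.Algebra T} (f : A ⟶ A') (f' : A' ⟶ A'') :
    MT.tmap (f ≫ f') (𝟙 B) = MT.tmap f (𝟙 B) ≫ MT.tmap f' (𝟙 B) := by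
  rw [← MT.tmap_comp, comp_id]

lemma aux_tmap_swap {A A' B B' : Monad.Algebra T} (f : A ⟶ A') (g : B ⟶ B') :
    MT.tmap f (𝟙 B) ≫ MT.tmap (𝟙 A') g = MT.tmap (𝟙 A) g ≫ MT.tmap f (𝟙 B') := by
  rw [← MT.tmap_comp, ← MT.tmap_comp, id_comp, comp_id, id_comp, comp_id]

lemma aux_tmap_hom_inv {A B B' : Monad.Algebra T} (e : B ≅ B') :
    MT.tmap (𝟙 A) e.hom ≫ MT.tmap (𝟙 A) e.inv = 𝟙 (tens A B) := by
  rw [← MT.tmap_comp, Iso.hom_inv_id, comp_id, MT.tmap_id]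

lemma aux_tmap_inv_hom {A B B' : Monad.Algebra T} (e : B ≅ B') :
    MT.tmap (𝟙 A) e.inv ≫ MT.tmap (𝟙 A) e.hom = 𝟙 (tens A B') := by
  rw [← MT.tmap_comp, Iso.inv_hom_id, comp_id, MT.tmap_id]

lemma aux_tmap_hom_cancel {A A' B Z : Monad.Algebra T} (e : A ≅ A')
    {x y : tens A' B ⟶ Z}
    (h : MT.tmap e.hom (𝟙 B) ≫ x = MT.tmap e.hom (𝟙 B) ≫ y) : x = y := by
  have hid : MT.tmap e.inv (𝟙 B) ≫ MT.tmap e.hom (𝟙 B) = 𝟙 (tens A' B) := by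
    rw [← MT.tmap_comp, Iso.inv_hom_id, comp_id, MT.tmap_id]
  calc x = (MT.tmap e.inv (𝟙 B) ≫ MT.tmap e.hom (𝟙 B)) ≫ x := by rw [hid, id_comp]
    _ = (MT.tmap e.inv (𝟙 B) ≫ MT.tmap e.hom (𝟙 B)) ≫ y := by
          rw [Category.assoc, h, ← Category.assoc]
    _ = y := by rw [hid, id_comp]

lemma aux_tmap_unit_cancel {A B : Monad.Algebra T} {f g : A ⟶ B}
    (h : MT.tmap (𝟙 ((Monad.free T).obj (𝟙_ C))) f
        = MT.tmap (𝟙 ((Monad.free T).obj (𝟙_ C))) g) : f = g := by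
  have hf := MT.lunit_natural f
  have hg := MT.lunit_natural g
  calc f = (MT.lunit A).inv ≫ (MT.lunit A).hom ≫ f := by rw [Iso.inv_hom_id_assoc]
    _ = (MT.lunit A).inv ≫ MT.tmap (𝟙 _) f ≫ (MT.lunit B).hom := by rw [← hf]
    _ = (MT.lunit A).inv ≫ MT.tmap (𝟙 _) g ≫ (MT.lunit B).hom := by rw [h]
    _ = (MT.lunit A).inv ≫ (MT.lunit A).hom ≫ g := by rw [hg]
    _ = g := by rw [Iso.inv_hom_id_assoc]

lemma aux_assoc_inv_natural {A A' B B' Cc Cc' : Monad.Algebra T}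
    (f : A ⟶ A') (g : B ⟶ B') (h : Cc ⟶ Cc') :
    MT.tmap f (MT.tmap g h) ≫ (MT.assoc A' B' Cc').inv
      = (MT.assoc A B Cc).inv ≫ MT.tmap (MT.tmap f g) h := by
  rw [Iso.comp_inv_eq, Category.assoc, MT.assoc_natural, Iso.inv_hom_id_assoc]

lemma aux_lunit_inv_natural {A B : Monad.Algebra T} (f : A ⟶ B) :
    f ≫ (MT.lunit B).inv = (MT.lunit A).inv ≫ MT.tmap (𝟙 _) f := by
  rw [Iso.comp_inv_eq, Category.assoc, MT.lunit_natural, Iso.inv_hom_id_assoc]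

/-- Kelly's coherence: `λ_{X ⊠ Y} ∘ α = λ_X ⊠ 1`. -/
lemma aux_lunit_tensor (X Y : Monad.Algebra T) :
    (MT.assoc ((Monad.free T).obj (𝟙_ C)) X Y).hom ≫ (MT.lunit (tens X Y)).hom
      = MT.tmap (MT.lunit X).hom (𝟙 Y) := by
  set E := (Monad.free T).obj (𝟙_ C) with hE
  apply aux_tmap_unit_cancel MT
  have hshift : (MT.assoc (tens E E) X Y).hom ≫ MT.tmap (MT.runit E).hom (𝟙 (tens X Y))
      = MT.tmap (MT.tmap (MT.runit E).hom (𝟙 X)) (𝟙 Y) ≫ (MT.assoc E X Y).hom := by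
    have h := MT.assoc_natural (MT.runit E).hom (𝟙 X) (𝟙 Y)
    rw [MT.tmap_id] at h
    exact h.symm
  have key : MT.tmap (MT.assoc E E X).hom (𝟙 Y)
      ≫ (MT.assoc E (tens E X) Y).hom
      ≫ MT.tmap (𝟙 E) ((MT.assoc E X Y).hom ≫ (MT.lunit (tens X Y)).hom)
      = MT.tmap (MT.assoc E E X).hom (𝟙 Y)
      ≫ (MT.assoc E (tens E X) Y).hom
      ≫ MT.tmap (𝟙 E) (MT.tmap (MT.lunit X).hom (𝟙 Y)) := by
    rw [aux_tmap_id_comp MT]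
    slice_lhs 1 3 => rw [MT.pentagon]
    slice_lhs 2 3 => rw [MT.triangle E (tens X Y)]
    rw [hshift, ← MT.triangle E X, aux_tmap_comp_id MT, Category.assoc,
      MT.assoc_natural]
  have key2 := aux_tmap_hom_cancel MT (MT.assoc E E X) key
  exact (cancel_epi (MT.assoc E (tens E X) Y).hom).mp key2

end AuxTau18
section AuxTau18b

variable {T : Monad C} {κ : MonoidalMonadStr T}
  {tens : Monad.Algebra T → Monad.Algebra T → Monad.Algebra T}
  {q : ∀ A B : Monad.Algebra T, (Monad.free T).obj (A.A ⊗ B.A) ⟶ tens A B}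
  (MT : InducedMonoidal T κ tens q)
  (M : Monad.Algebra T) (mm : tens M M ⟶ M) (ee : (Monad.free T).obj (𝟙_ C) ⟶ M)

/-- The action of `M` on the free `M`-module `M ⊠ A`. -/
def auxAct (A : Monad.Algebra T) : tens M (tens M A) ⟶ tens M A :=
  (MT.assoc M M A).inv ≫ MT.tmap mm (𝟙 A)

/-- The unit map `A ⟶ M ⊠ A`. -/
def auxTau (A : Monad.Algebra T) : A ⟶ tens M A :=
  (MT.lunit A).inv ≫ MT.tmap ee (𝟙 A)

lemma auxTau_natural {A B : Monad.Algebra T} (g : A ⟶ B) :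
    g ≫ auxTau MT M ee B = auxTau MT M ee A ≫ MT.tmap (𝟙 M) g := by
  unfold auxTau
  rw [← Category.assoc, aux_lunit_inv_natural MT g, Category.assoc, Category.assoc]
  congr 1
  rw [← MT.tmap_comp, ← MT.tmap_comp]
  simp

lemma auxAct_natural {A B : Monad.Algebra T} (g : A ⟶ B) :
    MT.tmap (𝟙 M) (MT.tmap (𝟙 M) g) ≫ auxAct MT M mm B
      = auxAct MT M mm A ≫ MT.tmap (𝟙 M) g := by
  unfold auxAct
  rw [← Category.assoc, aux_assoc_inv_natural MT (𝟙 M) (𝟙 M) g, MT.tmap_id,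
    Category.assoc, Category.assoc]
  congr 1
  rw [← MT.tmap_comp, ← MT.tmap_comp]
  simp

lemma aux_tau_act (hone : MT.tmap ee (𝟙 M) ≫ mm = (MT.lunit M).hom)
    (A : Monad.Algebra T) :
    auxTau MT M ee (tens M A) ≫ auxAct MT M mm A = 𝟙 (tens M A) := by
  unfold auxTau auxAct
  have h1 : MT.tmap ee (𝟙 (tens M A)) ≫ (MT.assoc M M A).inv
      = (MT.assoc ((Monad.free T).obj (𝟙_ C)) M A).inv
          ≫ MT.tmap (MT.tmap ee (𝟙 M)) (𝟙 A) := by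
    have h := aux_assoc_inv_natural MT ee (𝟙 M) (𝟙 A)
    rwa [MT.tmap_id] at h
  have h2 : MT.tmap (MT.tmap ee (𝟙 M)) (𝟙 A) ≫ MT.tmap mm (𝟙 A)
      = (MT.assoc ((Monad.free T).obj (𝟙_ C)) M A).hom ≫ (MT.lunit (tens M A)).hom := by
    rw [← aux_tmap_comp_id MT, hone, aux_lunit_tensor MT M A]
  slice_lhs 2 3 => rw [h1]
  slice_lhs 3 4 => rw [h2]
  simp

lemma aux_act_tau (hone' : MT.tmap (𝟙 M) ee ≫ mm = (MT.runit M).hom)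
    (A : Monad.Algebra T) :
    MT.tmap (𝟙 M) (auxTau MT M ee A) ≫ auxAct MT M mm A = 𝟙 (tens M A) := by
  unfold auxTau auxAct
  rw [aux_tmap_id_comp MT]
  have h1 : MT.tmap (𝟙 M) (MT.tmap ee (𝟙 A)) ≫ (MT.assoc M M A).inv
      = (MT.assoc M ((Monad.free T).obj (𝟙_ C)) A).inv
          ≫ MT.tmap (MT.tmap (𝟙 M) ee) (𝟙 A) :=
    aux_assoc_inv_natural MT (𝟙 M) ee (𝟙 A)
  have h2 : MT.tmap (MT.tmap (𝟙 M) ee) (𝟙 A) ≫ MT.tmap mm (𝟙 A)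
      = (MT.assoc M ((Monad.free T).obj (𝟙_ C)) A).hom
          ≫ MT.tmap (𝟙 M) (MT.lunit A).hom := by
    rw [← aux_tmap_comp_id MT, hone', MT.triangle M A]
  slice_lhs 2 3 => rw [h1]
  slice_lhs 3 4 => rw [h2]
  simp only [Category.assoc, Iso.inv_hom_id_assoc]
  rw [← MT.tmap_comp]
  simp [MT.tmap_id]

lemma aux_act_act
    (hassoc : MT.tmap mm (𝟙 M) ≫ mm = (MT.assoc M M M).hom ≫ MT.tmap (𝟙 M) mm ≫ mm)
    (A : Monad.Algebra T) :
    MT.tmap (𝟙 M) (auxAct MT M mm A) ≫ auxAct MT M mm A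
      = auxAct MT M mm (tens M A) ≫ auxAct MT M mm A := by
  unfold auxAct
  rw [aux_tmap_id_comp MT]
  have h1 : MT.tmap (𝟙 M) (MT.tmap mm (𝟙 A)) ≫ (MT.assoc M M A).inv
      = (MT.assoc M (tens M M) A).inv ≫ MT.tmap (MT.tmap (𝟙 M) mm) (𝟙 A) :=
    aux_assoc_inv_natural MT (𝟙 M) mm (𝟙 A)
  have h2 : MT.tmap mm (𝟙 (tens M A)) ≫ (MT.assoc M M A).inv
      = (MT.assoc (tens M M) M A).inv ≫ MT.tmap (MT.tmap mm (𝟙 M)) (𝟙 A) := by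
    have h := aux_assoc_inv_natural MT mm (𝟙 M) (𝟙 A)
    rwa [MT.tmap_id] at h
  slice_lhs 2 3 => rw [h1]
  slice_lhs 3 4 => rw [← aux_tmap_comp_id MT]
  slice_rhs 2 3 => rw [h2]
  slice_rhs 3 4 => rw [← aux_tmap_comp_id MT]
  rw [hassoc]
  conv_rhs => rw [aux_tmap_comp_id MT]
  -- now it remains to use the pentagon
  have h3 : (MT.assoc M M (tens M A)).inv ≫ (MT.assoc (tens M M) M A).inv
        ≫ MT.tmap (MT.assoc M M M).hom (𝟙 A)
      = MT.tmap (𝟙 M) (MT.assoc M M A).inv ≫ (MT.assoc M (tens M M) A).inv := by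
    rw [Iso.inv_comp_eq, Iso.inv_comp_eq]
    have P := MT.pentagon M M M A
    calc MT.tmap (MT.assoc M M M).hom (𝟙 A)
        = (MT.tmap (MT.assoc M M M).hom (𝟙 A) ≫ (MT.assoc M (tens M M) A).hom
            ≫ MT.tmap (𝟙 M) (MT.assoc M M A).hom)
          ≫ MT.tmap (𝟙 M) (MT.assoc M M A).inv ≫ (MT.assoc M (tens M M) A).inv := by
            simp only [Category.assoc]
            slice_rhs 3 4 => rw [aux_tmap_hom_inv MT (MT.assoc M M A)]
            simp
      _ = ((MT.assoc (tens M M) M A).hom ≫ (MT.assoc M M (tens M A)).hom)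
          ≫ MT.tmap (𝟙 M) (MT.assoc M M A).inv ≫ (MT.assoc M (tens M M) A).inv := by
            rw [P]
      _ = (MT.assoc (tens M M) M A).hom ≫ (MT.assoc M M (tens M A)).hom
          ≫ MT.tmap (𝟙 M) (MT.assoc M M A).inv ≫ (MT.assoc M (tens M M) A).inv := by
            simp only [Category.assoc]
  slice_rhs 1 3 => rw [h3]
  simp only [Category.assoc]

end AuxTau18b
section AuxTau18c

variable {T : Monad C} {κ : MonoidalMonadStr T}
  {tens : Monad.Algebra T → Monad.Algebra T → Monad.Algebra T}
  {q : ∀ A B : Monad.Algebra T, (Monad.free T).obj (A.A ⊗ B.A) ⟶ tens A B}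
  (MT : InducedMonoidal T κ tens q)
  (M : Monad.Algebra T) (mm : tens M M ⟶ M) (ee : (Monad.free T).obj (𝟙_ C) ⟶ M)

lemma aux_structHom_natural {A B : Monad.Algebra T} (g : A ⟶ B) :
    (Monad.free T).map g.f ≫ structHom T B = structHom T A ≫ g := by
  apply Monad.Algebra.Hom.ext'
  simp [structHom]
  exact g.h

lemma aux_eta_structHom (X : C) :
    (Monad.free T).map (T.η.app X) ≫ structHom T ((Monad.free T).obj X)
      = 𝟙 ((Monad.free T).obj X) := by
  apply Monad.Algebra.Hom.ext'
  simp [structHom, T.right_unit]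
  exact T.right_unit X

/-- The multiplication of `M ⊠ T`, as a morphism of algebras. -/
def auxMuHat (X : C) :
    tens M ((Monad.free T).obj ((tens M ((Monad.free T).obj X)).A))
      ⟶ tens M ((Monad.free T).obj X) :=
  MT.tmap (𝟙 M) (structHom T (tens M ((Monad.free T).obj X)))
    ≫ auxAct MT M mm ((Monad.free T).obj X)

lemma aux_muTilde_eq (X : C) :
    muTilde T MT M mm X = (auxMuHat MT M mm X).f := rfl

lemma aux_tauHom_eq (X : C) :
    tauHom T MT M ee X = (auxTau MT M ee ((Monad.free T).obj X)).f := rfl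

lemma aux_muHat_natural {X Y : C} (f : X ⟶ Y) :
    MT.tmap (𝟙 M) ((Monad.free T).map ((MT.tmap (𝟙 M) ((Monad.free T).map f)).f))
        ≫ auxMuHat MT M mm Y
      = auxMuHat MT M mm X ≫ MT.tmap (𝟙 M) ((Monad.free T).map f) := by
  unfold auxMuHat
  rw [← Category.assoc, ← aux_tmap_id_comp MT,
    aux_structHom_natural (MT.tmap (𝟙 M) ((Monad.free T).map f)),
    aux_tmap_id_comp MT, Category.assoc,
    auxAct_natural MT M mm ((Monad.free T).map f), ← Category.assoc]

lemma aux_left_unit_hat (hone : MT.tmap ee (𝟙 M) ≫ mm = (MT.lunit M).hom) (X : C) :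
    auxTau MT M ee ((Monad.free T).obj ((tens M ((Monad.free T).obj X)).A))
        ≫ auxMuHat MT M mm X
      = structHom T (tens M ((Monad.free T).obj X)) := by
  unfold auxMuHat
  rw [← Category.assoc, ← auxTau_natural MT M ee (structHom T _), Category.assoc,
    aux_tau_act MT M mm ee hone ((Monad.free T).obj X), comp_id]

lemma aux_right_unit_hat (hone' : MT.tmap (𝟙 M) ee ≫ mm = (MT.runit M).hom) (X : C) :
    MT.tmap (𝟙 M) ((Monad.free T).map (T.η.app X ≫ tauHom T MT M ee X))
        ≫ auxMuHat MT M mm X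
      = 𝟙 (tens M ((Monad.free T).obj X)) := by
  unfold auxMuHat
  rw [Functor.map_comp, aux_tauHom_eq MT M ee X, aux_tmap_id_comp MT]
  slice_lhs 2 3 => erw [← aux_tmap_id_comp MT,
    aux_structHom_natural (auxTau MT M ee ((Monad.free T).obj X)),
    aux_tmap_id_comp MT]
  slice_lhs 1 2 => erw [← aux_tmap_id_comp MT, aux_eta_structHom]
  rw [MT.tmap_id M ((Monad.free T).obj X)]
  simpa using aux_act_tau MT M mm ee hone' ((Monad.free T).obj X)

lemma aux_assoc_hat
    (hassoc : MT.tmap mm (𝟙 M) ≫ mm = (MT.assoc M M M).hom ≫ MT.tmap (𝟙 M) mm ≫ mm)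
    (X : C) :
    MT.tmap (𝟙 M) ((Monad.free T).map ((auxMuHat MT M mm X).f)) ≫ auxMuHat MT M mm X
      = auxMuHat MT M mm ((tens M ((Monad.free T).obj X)).A) ≫ auxMuHat MT M mm X := by
  unfold auxMuHat
  slice_lhs 1 2 => rw [← aux_tmap_id_comp MT,
    aux_structHom_natural (MT.tmap (𝟙 M) (structHom T (tens M ((Monad.free T).obj X)))
      ≫ auxAct MT M mm ((Monad.free T).obj X)),
    aux_tmap_id_comp MT, aux_tmap_id_comp MT]
  slice_lhs 3 4 => rw [aux_act_act MT M mm hassoc ((Monad.free T).obj X)]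
  slice_lhs 2 3 => rw [auxAct_natural MT M mm (structHom T (tens M ((Monad.free T).obj X)))]
  simp only [Category.assoc]

lemma aux_app_mu_hat (hone' : MT.tmap (𝟙 M) ee ≫ mm = (MT.runit M).hom) (X : C) :
    structHom T ((Monad.free T).obj X) ≫ auxTau MT M ee ((Monad.free T).obj X)
      = (Monad.free T).map ((auxTau MT M ee ((Monad.free T).obj X)).f)
          ≫ auxTau MT M ee ((Monad.free T).obj ((tens M ((Monad.free T).obj X)).A))
          ≫ auxMuHat MT M mm X := by
  conv_rhs => rw [← Category.assoc,
    auxTau_natural MT M ee ((Monad.free T).map ((auxTau MT M ee ((Monad.free T).obj X)).f))]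
  unfold auxMuHat
  slice_rhs 2 3 => rw [← aux_tmap_id_comp MT,
    aux_structHom_natural (auxTau MT M ee ((Monad.free T).obj X)),
    aux_tmap_id_comp MT]
  slice_rhs 3 4 => rw [aux_act_tau MT M mm ee hone' ((Monad.free T).obj X)]
  rw [comp_id, ← auxTau_natural MT M ee (structHom T ((Monad.free T).obj X))]

end AuxTau18c
section AuxTau18d

variable {T : Monad C} {κ : MonoidalMonadStr T}
  {tens : Monad.Algebra T → Monad.Algebra T → Monad.Algebra T}
  {q : ∀ A B : Monad.Algebra T, (Monad.free T).obj (A.A ⊗ B.A) ⟶ tens A B}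
  (MT : InducedMonoidal T κ tens q)
  (M : Monad.Algebra T) (mm : tens M M ⟶ M) (ee : (Monad.free T).obj (𝟙_ C) ⟶ M)

/-- The monad `M ⊠ T`. -/
def auxW
    (hassoc : MT.tmap mm (𝟙 M) ≫ mm = (MT.assoc M M M).hom ≫ MT.tmap (𝟙 M) mm ≫ mm)
    (hone : MT.tmap ee (𝟙 M) ≫ mm = (MT.lunit M).hom)
    (hone' : MT.tmap (𝟙 M) ee ≫ mm = (MT.runit M).hom) : Monad C where
  obj X := (tens M ((Monad.free T).obj X)).A
  map {X Y} f := (MT.tmap (𝟙 M) ((Monad.free T).map f)).f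
  map_id X := by
    rw [CategoryTheory.Functor.map_id, MT.tmap_id M ((Monad.free T).obj X)]
    rfl
  map_comp {X Y Z} f g := by
    rw [Functor.map_comp, aux_tmap_id_comp MT]
    rfl
  η :=
    { app := fun X => T.η.app X ≫ tauHom T MT M ee X
      naturality := fun X Y f => by
        dsimp
        have h := congrArg Monad.Algebra.Hom.f (auxTau_natural MT M ee ((Monad.free T).map f))
        simp only [Monad.Algebra.comp_f] at h
        have hn := T.η.naturality f
        dsimp at hn
        simp only [aux_tauHom_eq MT M ee]
        erw [← Category.assoc, hn, Category.assoc]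
        rw [show (((Monad.free T).map f).f : T.obj X ⟶ T.obj Y) = T.map f from rfl] at h
        erw [h]
        exact (Category.assoc _ _ _).symm }
  μ :=
    { app := fun X => muTilde T MT M mm X
      naturality := fun X Y f => by
        have h := congrArg Monad.Algebra.Hom.f (aux_muHat_natural MT M mm f)
        simp only [Monad.Algebra.comp_f] at h
        show (MT.tmap (𝟙 M) ((Monad.free T).map
            ((MT.tmap (𝟙 M) ((Monad.free T).map f)).f))).f ≫ muTilde T MT M mm Y
          = muTilde T MT M mm X ≫ (MT.tmap (𝟙 M) ((Monad.free T).map f)).f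
        simp only [aux_muTilde_eq MT M mm]
        exact h }
  assoc X := by
    have h := congrArg Monad.Algebra.Hom.f (aux_assoc_hat MT M mm hassoc X)
    simp only [Monad.Algebra.comp_f] at h
    show (MT.tmap (𝟙 M) ((Monad.free T).map (muTilde T MT M mm X))).f
          ≫ muTilde T MT M mm X
        = muTilde T MT M mm ((tens M ((Monad.free T).obj X)).A) ≫ muTilde T MT M mm X
    simp only [aux_muTilde_eq MT M mm]
    exact h
  left_unit X := by
    have h := congrArg Monad.Algebra.Hom.f (aux_left_unit_hat MT M mm ee hone X)
    simp only [Monad.Algebra.comp_f] at h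
    show (T.η.app ((tens M ((Monad.free T).obj X)).A)
          ≫ tauHom T MT M ee ((tens M ((Monad.free T).obj X)).A))
        ≫ muTilde T MT M mm X = 𝟙 _
    simp only [aux_tauHom_eq MT M ee, aux_muTilde_eq MT M mm]
    erw [Category.assoc, h]
    rw [show (structHom T (tens M ((Monad.free T).obj X))).f
        = (tens M ((Monad.free T).obj X)).a from rfl]
    exact (tens M ((Monad.free T).obj X)).unit
  right_unit X := by
    have h := congrArg Monad.Algebra.Hom.f (aux_right_unit_hat MT M mm ee hone' X)
    simp only [Monad.Algebra.comp_f] at h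
    show (MT.tmap (𝟙 M) ((Monad.free T).map (T.η.app X ≫ tauHom T MT M ee X))).f
        ≫ muTilde T MT M mm X = 𝟙 _
    simp only [aux_muTilde_eq MT M mm]
    exact h

/-- `τ` as a monad morphism `T ⟶ M ⊠ T`. -/
def auxTauMonadHom
    (hassoc : MT.tmap mm (𝟙 M) ≫ mm = (MT.assoc M M M).hom ≫ MT.tmap (𝟙 M) mm ≫ mm)
    (hone : MT.tmap ee (𝟙 M) ≫ mm = (MT.lunit M).hom)
    (hone' : MT.tmap (𝟙 M) ee ≫ mm = (MT.runit M).hom) :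
    T ⟶ auxW MT M mm ee hassoc hone hone' where
  app X := tauHom T MT M ee X
  naturality X Y f := by
    have h := congrArg Monad.Algebra.Hom.f (auxTau_natural MT M ee ((Monad.free T).map f))
    simp only [Monad.Algebra.comp_f] at h
    show T.map f ≫ tauHom T MT M ee Y
        = tauHom T MT M ee X ≫ (MT.tmap (𝟙 M) ((Monad.free T).map f)).f
    simp only [aux_tauHom_eq MT M ee]
    rw [show (((Monad.free T).map f).f : T.obj X ⟶ T.obj Y) = T.map f from rfl] at h
    exact h
  app_η X := rfl
  app_μ X := by
    have h := congrArg Monad.Algebra.Hom.f (aux_app_mu_hat MT M mm ee hone' X)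
    simp only [Monad.Algebra.comp_f] at h
    show T.μ.app X ≫ tauHom T MT M ee X
        = (T.map (tauHom T MT M ee X)
            ≫ tauHom T MT M ee ((tens M ((Monad.free T).obj X)).A))
          ≫ muTilde T MT M mm X
    simp only [aux_tauHom_eq MT M ee, aux_muTilde_eq MT M mm]
    rw [show (structHom T ((Monad.free T).obj X)).f = T.μ.app X from rfl] at h
    rw [show ((Monad.free T).map ((auxTau MT M ee ((Monad.free T).obj X)).f)).f
        = T.map ((auxTau MT M ee ((Monad.free T).obj X)).f) from rfl] at h
    erw [h]
    exact (Category.assoc _ _ _).symm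

end AuxTau18d

/-- for a monoid `(M, m, e)` in the induced monoidal category
`(C^T, ⊠, TE)`, there is a monad `M ⊠ T` on `C` with functor `X ↦ M ⊠ TX`,
multiplication `(m ⊠ 1)·ᾱ⁻¹·(1 ⊠ (ξ ⋈ μ))` and unit `(e ⊠ 1)·λ̄⁻¹·η`, and the
morphisms `τ_X = (e ⊠ 1_{TX})·λ̄⁻¹ : TX ⟶ M ⊠ TX` are the components of a monad
morphism `τ : T ⟶ M ⊠ T`. -/
theorem tau_is_monadHom
    (T : Monad C) (κ : MonoidalMonadStr T)
    (tens : Monad.Algebra T → Monad.Algebra T → Monad.Algebra T)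
    (q : ∀ A B : Monad.Algebra T, (Monad.free T).obj (A.A ⊗ B.A) ⟶ tens A B)
    (w : ∀ A B : Monad.Algebra T,
        freeHom T (κ.κ A.A B.A) ≫ q A B = (Monad.free T).map (A.a ⊗ₘ B.a) ≫ q A B)
    (hq : ∀ A B : Monad.Algebra T, Nonempty (IsColimit (Cofork.ofπ (q A B) (w A B))))
    (MT : InducedMonoidal T κ tens q)
    -- a monoid `(M, m, e)` in `(C^T, ⊠, TE)`
    (M : Monad.Algebra T) (mm : tens M M ⟶ M) (ee : (Monad.free T).obj (𝟙_ C) ⟶ M)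
    (hassoc : MT.tmap mm (𝟙 M) ≫ mm = (MT.assoc M M M).hom ≫ MT.tmap (𝟙 M) mm ≫ mm)
    (hone : MT.tmap ee (𝟙 M) ≫ mm = (MT.lunit M).hom)
    (hone' : MT.tmap (𝟙 M) ee ≫ mm = (MT.runit M).hom) :
    ∃ (W : Monad C) (_ : ∀ X : C, W.obj X = (tens M ((Monad.free T).obj X)).A),
      (∀ {X Y : C} (f : X ⟶ Y),
        HEq (W.map f) ((MT.tmap (𝟙 M) ((Monad.free T).map f)).f)) ∧
      (∀ X : C, HEq (W.μ.app X) (muTilde T MT M mm X)) ∧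
      (∀ X : C, HEq (W.η.app X) (T.η.app X ≫ tauHom T MT M ee X)) ∧
      ∃ τ : T ⟶ W, ∀ X : C, HEq (τ.app X) (tauHom T MT M ee X) := by
  refine ⟨auxW MT M mm ee hassoc hone hone', fun X => rfl, ?_, ?_, ?_, ?_⟩
  · intro X Y f
    exact HEq.rfl
  · intro X
    exact HEq.rfl
  · intro X
    exact HEq.rfl
  · exact ⟨auxTauMonadHom MT M mm ee hassoc hone hone', fun X => HEq.rfl⟩
end
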